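/- Let n ∈ ℕ and let g : ℝ → ℝ be nonnegative and nondecreasing on the interval [3π/2 + 2nπ, 7π/2 + 2nπ]. Then ∫_{3π/2 + 2nπ}^{7π/2 + 2nπ} g(u) cos(u) du ≤ 0. -/

import Mathlib

open Real MeasureTheory

theorem integral_mul_cos_nonpos_of_monotoneOn_shifted (n : ℕ) (g : ℝ → ℝ)
    (hnonneg : ∀ u ∈ Set.Icc (3 * π / 2 + 2 * n * π) (7 * π / 2 + 2 * n * π), 0 ≤ g u)
    (hmono : MonotoneOn g (Set.Icc (3 * π / 2 + 2 * n * π) (7 * π / 2 + 2 * n * π))) :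
    (∫ u in (3 * π / 2 + 2 * n * π)..(7 * π / 2 + 2 * n * π), g u * Real.cos u) ≤ 0 := by
  have hπ : (0:ℝ) < π := Real.pi_pos
  set a : ℝ := 3 * π / 2 + 2 * n * π with ha
  set b : ℝ := 5 * π / 2 + 2 * n * π with hb
  set c : ℝ := 7 * π / 2 + 2 * n * π with hc
  have hab : a ≤ b := by rw [ha, hb]; nlinarith
  have hbc : b ≤ c := by rw [hb, hc]; nlinarith
  have hba : b - π = a := by rw [ha, hb]; ring
  have hcb : c - π = b := by rw [hb, hc]; ring
  -- integrability
  have hsub1 : Set.uIcc a b ⊆ Set.Icc a c := by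
    rw [Set.uIcc_of_le hab]; exact Set.Icc_subset_Icc le_rfl hbc
  have hsub2 : Set.uIcc b c ⊆ Set.Icc a c := by
    rw [Set.uIcc_of_le hbc]; exact Set.Icc_subset_Icc hab le_rfl
  have hint1 : IntervalIntegrable (fun u => g u * Real.cos u) volume a b :=
    ((hmono.mono hsub1).intervalIntegrable).mul_continuousOn Real.continuousOn_cos
  have hint2 : IntervalIntegrable (fun u => g u * Real.cos u) volume b c :=
    ((hmono.mono hsub2).intervalIntegrable).mul_continuousOn Real.continuousOn_cos
  -- substitution: ∫ a..b = - ∫ b..c g(u-π) cos u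
  have hsubst : (∫ u in a..b, g u * Real.cos u)
      = - ∫ u in b..c, g (u - π) * Real.cos u := by
    have h1 : (∫ u in b..c, g (u - π) * Real.cos (u - π))
        = ∫ u in a..b, g u * Real.cos u := by
      rw [intervalIntegral.integral_comp_sub_right (fun u => g u * Real.cos u) π,
        hba, hcb]
    have h2 : (∫ u in b..c, g (u - π) * Real.cos (u - π))
        = - ∫ u in b..c, g (u - π) * Real.cos u := by
      rw [← intervalIntegral.integral_neg]
      congr 1; ext u; rw [Real.cos_sub_pi]; ring
    rw [← h1, h2]
  have hint2' : IntervalIntegrable (fun u => g (u - π) * Real.cos u) volume b c := by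
    have := ((hmono.mono hsub1).intervalIntegrable).comp_sub_right π
    rw [show a + π = b by rw [← hba]; ring, show b + π = c by rw [← hcb]; ring] at this
    exact this.mul_continuousOn Real.continuousOn_cos
  have hsplit : (∫ u in a..c, g u * Real.cos u)
      = ∫ u in b..c, (g u - g (u - π)) * Real.cos u := by
    rw [← intervalIntegral.integral_add_adjacent_intervals hint1 hint2, hsubst]
    rw [neg_add_eq_sub, ← intervalIntegral.integral_sub hint2 hint2']
    congr 1; ext u; ring
  have : (∫ u in b..c, (g u - g (u - π)) * Real.cos u) ≤ 0 := by
    have hint3 : IntervalIntegrable (fun u => (g u - g (u - π)) * Real.cos u) volume b c := by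
      have := hint2.sub hint2'
      refine this.congr (fun u _ => congrFun (f := fun u => g u * Real.cos u - g (u - π) * Real.cos u)
        (g := fun u => (g u - g (u - π)) * Real.cos u) ?_ u)
      ext u; ring
    have := intervalIntegral.integral_mono_on hbc hint3
      (intervalIntegrable_const (c := (0:ℝ))) ?_
    · simpa using this
    · intro u hu
      have hu1 : u - π ∈ Set.Icc a c := by
        constructor
        · rw [← hba]; linarith [hu.1]
        · linarith [hu.2, hπ]
      have hu2 : u ∈ Set.Icc a c := ⟨le_trans hab hu.1, hu.2⟩
      have hg : g (u - π) ≤ g u := hmono hu1 hu2 (by linarith)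
      have hcos : Real.cos u ≤ 0 := by
        have : Real.cos u = Real.cos (u - ((n + 1 : ℕ) : ℝ) * (2 * π)) := by
          rw [Real.cos_sub_nat_mul_two_pi]
        rw [this]
        apply Real.cos_nonpos_of_pi_div_two_le_of_le
        · rw [hb] at hu; push_cast; nlinarith [hu.1]
        · rw [hc] at hu; push_cast; nlinarith [hu.2]
      exact mul_nonpos_of_nonneg_of_nonpos (by linarith) hcos
  calc (∫ u in a..c, g u * Real.cos u) = _ := hsplit
    _ ≤ 0 := this
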